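/- Weighted matrix-tree theorem (Kirchhoff) for the complete graph: let n ≥ 1 and let X_{ij} = X_{ji} (for i ≠ j in {1,…,n}) be independent variables. Define the n×n matrix L over the polynomial ring by L_{ii} = ∑_{ℓ ≠ i} X_{iℓ} and L_{ij} = −X_{ij} for i ≠ j, and let B be the matrix obtained from L by deleting the last row and the last column. Then det(B) = ∑_T ∏_{{i,j} ∈ E(T)} X_{ij}, where the sum ranges over all spanning trees T of the complete graph K_n on the vertex set {1,…,n} (i.e. over all graphs on {1,…,n} that are connected and acyclic). -/

import Mathlib

open MvPolynomial
open scoped Classical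

/-- The weighted Laplacian of the complete graph `K_{n+1}`, with independent variables
`X_{ij} = X_{ji}` indexed by unordered pairs: `L i i = ∑_{ℓ ≠ i} X_{iℓ}` and
`L i j = −X_{ij}` for `i ≠ j`. -/
noncomputable def weightedLaplacian (n : ℕ) :
    Matrix (Fin (n + 1)) (Fin (n + 1)) (MvPolynomial (Sym2 (Fin (n + 1))) ℤ) :=
  Matrix.of fun i j =>
    if i = j then ∑ ℓ ∈ Finset.univ \ {i}, X s(i, ℓ) else - X s(i, j)


open Finset Matrix SimpleGraph

namespace MTT

variable {n : ℕ}




/-- extend `f : Fin n → Fin (n+1)` to a self-map of `Fin (n+1)` fixing `last`. -/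
def ext (f : Fin n → Fin (n + 1)) : Fin (n + 1) → Fin (n + 1) :=
  fun v => if h : v = Fin.last n then v else f (v.castPred h)

lemma ext_castSucc (f : Fin n → Fin (n + 1)) (p : Fin n) :
    ext f p.castSucc = f p := by
  simp [ext, (Fin.castSucc_lt_last p).ne]

lemma ext_last (f : Fin n → Fin (n + 1)) : ext f (Fin.last n) = Fin.last n := by
  simp [ext]

/-- `f` is acyclic: iterating (from any vertex) reaches the root `last`. -/
def Acyc (f : Fin n → Fin (n + 1)) : Prop :=
  ∀ v, ∃ k, (ext f)^[k] v = Fin.last n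

noncomputable def rho {f : Fin n → Fin (n + 1)} (hA : Acyc f) (v : Fin (n + 1)) : ℕ :=
  Nat.find (hA v)

lemma rho_spec {f : Fin n → Fin (n + 1)} (hA : Acyc f) (v) :
    (ext f)^[rho hA v] v = Fin.last n := Nat.find_spec (hA v)

lemma rho_ext_lt {f : Fin n → Fin (n + 1)} (hA : Acyc f) {v} (hv : v ≠ Fin.last n) :
    rho hA (ext f v) < rho hA v := by
  have h0 : rho hA v ≠ 0 := by
    intro h
    exact hv (by simpa [h] using rho_spec hA v)
  have hs : (ext f)^[rho hA v - 1] (ext f v) = Fin.last n := by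
    rw [← Function.iterate_succ_apply]
    have h1 : (rho hA v - 1).succ = rho hA v := Nat.succ_pred_eq_of_pos (Nat.pos_of_ne_zero h0)
    rw [h1]
    exact rho_spec hA v
  calc rho hA (ext f v) ≤ rho hA v - 1 := Nat.find_le hs
    _ < rho hA v := Nat.pred_lt h0

/-- the 0/±1 matrix whose det weights the term of `f` in the expansion. -/
def Mz (f : Fin n → Fin (n + 1)) : Matrix (Fin n) (Fin n) ℤ :=
  Matrix.of fun p q => (if q = p then 1 else 0) - (if f p = q.castSucc then 1 else 0)

lemma det_Mz_of_acyc {f : Fin n → Fin (n + 1)} (hA : Acyc f) : (Mz f).det = 1 := by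
  have hbt : (Mz f).BlockTriangular (fun p => -(rho hA p.castSucc : ℤ)) := by
    intro i j hij
    simp only [Mz, Matrix.of_apply]
    have hji : j ≠ i := by rintro rfl; exact lt_irrefl _ hij
    rw [if_neg hji, if_neg, sub_zero]
    intro hfi
    have : rho hA (ext f i.castSucc) < rho hA i.castSucc := by
      exact rho_ext_lt hA (Fin.castSucc_lt_last i).ne
    rw [ext_castSucc, hfi] at this
    have h2 : ((rho hA j.castSucc : ℤ)) ≤ rho hA i.castSucc := by exact_mod_cast this.le
    simp only [neg_lt_neg_iff] at hij
    exact absurd hij (not_lt.2 h2)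
  rw [hbt.det]
  apply Finset.prod_eq_one
  intro a _
  have : (Mz f).toSquareBlock (fun p => -(rho hA p.castSucc : ℤ)) a = 1 := by
    ext ⟨i, hi⟩ ⟨j, hj⟩
    by_cases hij : i = j
    · subst hij
      have h1 : ¬ f i = i.castSucc := by
        intro hfi
        have := rho_ext_lt hA (Fin.castSucc_lt_last i).ne
        rw [ext_castSucc, hfi] at this
        exact absurd this (lt_irrefl _)
      simp [Mz, Matrix.toSquareBlock_def, Matrix.one_apply, h1]
    · have h1 : ¬ f i = j.castSucc := by
        intro hfi
        have := rho_ext_lt hA (Fin.castSucc_lt_last i).ne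
        rw [ext_castSucc, hfi] at this
        have h3 : (rho hA j.castSucc : ℤ) < rho hA i.castSucc := by exact_mod_cast this
        have h4 : -(rho hA i.castSucc : ℤ) < -(rho hA j.castSucc : ℤ) := by linarith
        rw [hi, hj] at h4
        exact lt_irrefl _ h4
      simp [Mz, Matrix.toSquareBlock_def, Matrix.one_apply, hij, Ne.symm hij, h1,
        Subtype.ext_iff]
  rw [this, Matrix.det_one]




lemma det_Mz_of_not_acyc {f : Fin n → Fin (n + 1)} (hnA : ¬ Acyc f) : (Mz f).det = 0 := by
  set g := ext f with hg
  rw [Acyc] at hnA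
  push_neg at hnA
  obtain ⟨v, hv⟩ := hnA
  -- find a periodic point
  obtain ⟨i, j, hij, hije⟩ : ∃ i j : ℕ, i ≠ j ∧ g^[i] v = g^[j] v := by
    obtain ⟨i, j, hij, h⟩ := Finite.exists_ne_map_eq_of_infinite (fun k : ℕ => g^[k] v)
    exact ⟨i, j, hij, h⟩
  wlog hlt : i < j generalizing i j
  · exact this j i hij.symm hije.symm (by omega)
  set u := g^[i] v with hu
  set m := j - i with hm
  have hm0 : 0 < m := by omega
  have hcyc : g^[m] u = u := by
    rw [hu, ← Function.iterate_add_apply]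
    have : m + i = j := by omega
    rw [this, ← hije]
  have hu_ne : ∀ k, g^[k] u ≠ Fin.last n := by
    intro k
    rw [hu, ← Function.iterate_add_apply]
    exact hv _
  have hmod : ∀ a, g^[a] u = g^[a % m] u := by
    intro a
    induction a using Nat.strong_induction_on with
    | _ a ih =>
      rcases lt_or_ge a m with h | h
      · rw [Nat.mod_eq_of_lt h]
      · have h1 : a = (a - m) + m := by omega
        have h2 : g^[a] u = g^[a - m] u := by
          conv_lhs => rw [h1]
          rw [Function.iterate_add_apply, hcyc]
        rw [h2, ih _ (by omega), Nat.mod_eq_sub_mod h]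
  set C : Finset (Fin (n + 1)) := (range m).image (fun k => g^[k] u) with hC
  have hmemC : ∀ c ∈ C, ∃ k, g^[k] u = c := by
    intro c hc
    rw [hC, mem_image] at hc
    obtain ⟨k, _, hk⟩ := hc
    exact ⟨k, hk⟩
  have hiterC : ∀ k, g^[k] u ∈ C := by
    intro k
    rw [hmod k, hC, mem_image]
    exact ⟨k % m, by simp [Nat.mod_lt _ hm0], rfl⟩
  have himg : C.image g = C := by
    apply Finset.Subset.antisymm
    · intro c hc
      rw [mem_image] at hc
      obtain ⟨b, hb, hbc⟩ := hc
      obtain ⟨k, hk⟩ := hmemC b hb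
      rw [← hbc, ← hk]
      exact (Function.iterate_succ_apply' g k u) ▸ hiterC (k+1)
    · intro c hc
      obtain ⟨k, hk⟩ := hmemC c hc
      rw [mem_image]
      refine ⟨g^[k + m - 1] u, hiterC _, ?_⟩
      have h5 : g (g^[k + m - 1] u) = g^[(k + m - 1) + 1] u :=
        (Function.iterate_succ_apply' g (k + m - 1) u).symm
      rw [h5]
      have h6 : (k + m - 1) + 1 = k + m := by omega
      rw [h6, Function.iterate_add_apply, hcyc, hk]
  have hInj : Set.InjOn g (C : Set (Fin (n + 1))) :=
    Finset.injOn_of_card_image_eq (by rw [himg])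
  have hlast : Fin.last n ∉ C := by
    intro h
    obtain ⟨k, hk⟩ := hmemC _ h
    exact hu_ne k hk
  have hgC : ∀ c ∈ C, g c ∈ C := by
    intro c hc
    rw [← himg]
    exact mem_image_of_mem _ hc
  -- the nonzero kernel vector
  set w : Fin n → ℤ := fun p => if p.castSucc ∈ C then 1 else 0 with hw
  have hw0 : w ≠ 0 := by
    have huC : u ∈ C := by simpa using hiterC 0
    have hune : u ≠ Fin.last n := hu_ne 0
    intro h
    have := congrFun h (u.castPred hune)
    rw [hw] at this
    simp [Fin.castSucc_castPred, huC] at this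
  refine Matrix.exists_vecMul_eq_zero_iff.mp ⟨w, hw0, ?_⟩
  funext q
  have hcol : ∀ p : Fin n, w p * Mz f p q =
      (if p = q then w p else 0) - (if p.castSucc ∈ C ∧ f p = q.castSucc then 1 else 0) := by
    intro p
    rw [hw]
    simp only [Mz, Matrix.of_apply]
    by_cases h2 : p = q
    · subst h2
      by_cases h1 : p.castSucc ∈ C <;> by_cases h3 : f p = p.castSucc <;>
        simp [h1, h3]
    · by_cases h1 : p.castSucc ∈ C <;> by_cases h3 : f p = q.castSucc <;>
        simp [h1, h2, h3, Ne.symm h2]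
  have : (w ᵥ* Mz f) q = ∑ p, w p * Mz f p q := by
    simp [Matrix.vecMul, dotProduct]
  rw [Pi.zero_apply, this]
  simp only [hcol]
  rw [Finset.sum_sub_distrib, Finset.sum_ite_eq' univ q w, if_pos (mem_univ q)]
  rw [Finset.sum_boole]
  by_cases hqC : q.castSucc ∈ C
  · -- exactly one preimage
    obtain ⟨c, hcC, hcg⟩ : ∃ c ∈ C, g c = q.castSucc := by
      have := hqC
      rw [← himg, mem_image] at this
      obtain ⟨c, hcC, hcg⟩ := this
      exact ⟨c, hcC, hcg⟩
    have hcne : c ≠ Fin.last n := fun h => hlast (h ▸ hcC)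
    set p₀ := c.castPred hcne with hp₀
    have hcs : p₀.castSucc = c := Fin.castSucc_castPred _ _
    have hfp₀ : f p₀ = q.castSucc := by
      rw [← ext_castSucc f p₀, hcs]
      exact hcg
    have : Finset.filter (fun p : Fin n => p.castSucc ∈ C ∧ f p = q.castSucc) univ = {p₀} := by
      apply Finset.eq_singleton_iff_unique_mem.mpr
      constructor
      · simp [hcs, hcC, hfp₀]
      · intro p hp
        rw [mem_filter] at hp
        obtain ⟨_, hpC, hpf⟩ := hp
        have : g p.castSucc = q.castSucc := by rw [hg, ext_castSucc]; exact hpf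
        have := hInj (by exact_mod_cast hpC) (by exact_mod_cast hcC) (by rw [this, hcg])
        exact Fin.castSucc_injective n (by rw [this, hcs])
    rw [this]
    simp [hw, hqC]
  · have : Finset.filter (fun p : Fin n => p.castSucc ∈ C ∧ f p = q.castSucc) univ = ∅ := by
      apply Finset.filter_eq_empty_iff.mpr
      intro p _
      rintro ⟨hpC, hpf⟩
      apply hqC
      rw [← hpf, ← ext_castSucc f p]
      exact hgC _ hpC
    rw [this]
    simp [hw, hqC]



abbrev R (n : ℕ) := MvPolynomial (Sym2 (Fin (n + 1))) ℤ

/-- row vectors -/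
noncomputable def vrow (p : Fin n) (ℓ : Fin (n + 1)) : Fin n → R n :=
  fun q => ((if q = p then 1 else 0) - (if ℓ = q.castSucc then 1 else 0) : R n)

lemma det_expand :
    (Matrix.of fun p q : Fin n =>
        weightedLaplacian n p.castSucc q.castSucc).det =
      ∑ f ∈ Fintype.piFinset (fun p : Fin n => univ \ {p.castSucc}),
        (∏ p, X s(p.castSucc, f p)) * (((Mz f).det : ℤ) : R n) := by
  have hB : (Matrix.of fun p q : Fin n => weightedLaplacian n p.castSucc q.castSucc) =
      Matrix.of (fun p => ∑ ℓ ∈ univ \ {p.castSucc},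
        (X s(p.castSucc, ℓ) : R n) • vrow p ℓ) := by
    refine Matrix.ext fun p q => ?_
    simp only [Matrix.of_apply, weightedLaplacian, vrow, Finset.sum_apply, Pi.smul_apply,
      smul_eq_mul]
    by_cases hpq : p = q
    · subst hpq
      rw [if_pos rfl]
      apply Finset.sum_congr rfl
      intro ℓ hℓ
      rw [mem_sdiff, mem_singleton] at hℓ
      rw [if_pos rfl, if_neg hℓ.2]
      ring
    · rw [if_neg (fun h => hpq (Fin.castSucc_injective n h))]
      rw [Finset.sum_eq_single q.castSucc]
      · rw [if_neg (Ne.symm hpq), if_pos rfl]; ring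
      · intro ℓ hℓ hne
        rw [if_neg (Ne.symm hpq), if_neg hne]
        ring
      · intro h
        exfalso
        apply h
        rw [mem_sdiff, mem_singleton]
        exact ⟨mem_univ _, fun h => hpq (Fin.castSucc_injective n h).symm⟩
  rw [hB]
  have hdet : (Matrix.of (fun p => ∑ ℓ ∈ univ \ {p.castSucc},
        (X s(p.castSucc, ℓ) : R n) • vrow p ℓ)).det =
      Matrix.detRowAlternating (R := R n) (fun p => ∑ ℓ ∈ univ \ {p.castSucc},
        (X s(p.castSucc, ℓ) : R n) • vrow p ℓ) := rfl
  rw [hdet]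
  rw [show (Matrix.detRowAlternating (R := R n) (n := Fin n))
      (fun p => ∑ ℓ ∈ univ \ {p.castSucc}, (X s(p.castSucc, ℓ) : R n) • vrow p ℓ) =
      (Matrix.detRowAlternating (R := R n) (n := Fin n)).toMultilinearMap
      (fun p => ∑ ℓ ∈ univ \ {p.castSucc}, (X s(p.castSucc, ℓ) : R n) • vrow p ℓ) from rfl]
  rw [MultilinearMap.map_sum_finset]
  apply Finset.sum_congr rfl
  intro f _
  rw [MultilinearMap.map_smul_univ]
  rw [smul_eq_mul]
  congr 1
  have hM : (Matrix.of fun p q => vrow p (f p) q) = (Mz f).map (Int.castRingHom (R n)) := by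
    refine Matrix.ext fun p q => ?_
    simp [Matrix.map_apply, Mz, vrow, apply_ite (Int.cast : ℤ → R n), eq_comm (a := f p)]
  have h1 : (Matrix.detRowAlternating (R := R n) (n := Fin n)).toMultilinearMap
      (fun p => vrow p (f p)) = ((Mz f).map (Int.castRingHom (R n))).det := by
    rw [← hM]
    rfl
  rw [h1]
  show ((Int.castRingHom (R n)).mapMatrix (Mz f)).det = _
  rw [← RingHom.map_det]
  simp



/-- the candidate edge set of `f`. -/
noncomputable def Ef (f : Fin n → Fin (n + 1)) : Finset (Sym2 (Fin (n + 1))) :=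
  univ.image (fun p : Fin n => s(p.castSucc, f p))

/-- the graph of `f`. -/
noncomputable def Gf (f : Fin n → Fin (n + 1)) : SimpleGraph (Fin (n + 1)) :=
  SimpleGraph.fromEdgeSet ((Ef f : Set (Sym2 (Fin (n + 1)))))

lemma adj_ext {f : Fin n → Fin (n + 1)} (hf : ∀ p, f p ≠ p.castSucc) {v : Fin (n + 1)}
    (hv : v ≠ Fin.last n) : (Gf f).Adj v (ext f v) := by
  rw [Gf, fromEdgeSet_adj]
  constructor
  · have : s(v, ext f v) = s((v.castPred hv).castSucc, f (v.castPred hv)) := by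
      rw [Fin.castSucc_castPred]
      congr 1
      rw [ext]
      simp [hv]
    rw [this]
    exact_mod_cast Finset.mem_image_of_mem _ (mem_univ (v.castPred hv))
  · intro h
    apply hf (v.castPred hv)
    rw [ext] at h
    simp only [hv, dif_neg, not_false_iff] at h
    rw [← h, Fin.castSucc_castPred]

lemma reach_last {f : Fin n → Fin (n + 1)} (hf : ∀ p, f p ≠ p.castSucc) (hA : Acyc f) :
    ∀ v, (Gf f).Reachable v (Fin.last n) := by
  have H : ∀ k : ℕ, ∀ v, rho hA v = k → (Gf f).Reachable v (Fin.last n) := by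
    intro k
    induction k using Nat.strong_induction_on with
    | _ k ih =>
      intro v hk
      by_cases hv : v = Fin.last n
      · rw [hv]
      · exact ((adj_ext hf hv).toWalk.reachable).trans
          (ih _ (hk ▸ rho_ext_lt hA hv) _ rfl)
  exact fun v => H _ v rfl

lemma connected_Gf {f : Fin n → Fin (n + 1)} (hf : ∀ p, f p ≠ p.castSucc) (hA : Acyc f) :
    (Gf f).Connected := by
  rw [connected_iff]
  exact ⟨fun u v => (reach_last hf hA u).trans (reach_last hf hA v).symm, ⟨Fin.last n⟩⟩

lemma adj_cases {f : Fin n → Fin (n + 1)} {a b : Fin (n + 1)} (h : (Gf f).Adj a b) :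
    (a ≠ Fin.last n ∧ b = ext f a) ∨ (b ≠ Fin.last n ∧ a = ext f b) := by
  rw [Gf, fromEdgeSet_adj] at h
  obtain ⟨he, -⟩ := h
  rw [Finset.mem_coe, Ef, Finset.mem_image] at he
  obtain ⟨p, -, hp⟩ := he
  rw [Sym2.eq_iff] at hp
  rcases hp with ⟨h1, h2⟩ | ⟨h1, h2⟩
  · left
    refine ⟨h1 ▸ (Fin.castSucc_lt_last p).ne, ?_⟩
    rw [← h1, ext_castSucc, h2]
  · right
    refine ⟨h1 ▸ (Fin.castSucc_lt_last p).ne, ?_⟩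
    rw [← h1, ext_castSucc, h2]

lemma adj_max {f : Fin n → Fin (n + 1)} (hA : Acyc f) {u x : Fin (n + 1)}
    (hadj : (Gf f).Adj u x) (hmax : rho hA x ≤ rho hA u) : x = ext f u := by
  rcases adj_cases hadj with ⟨h1, h2⟩ | ⟨h1, h2⟩
  · exact h2
  · exfalso
    have := rho_ext_lt hA h1
    rw [← h2] at this
    exact absurd hmax (not_le.2 this)

lemma isAcyclic_Gf {f : Fin n → Fin (n + 1)} (hf : ∀ p, f p ≠ p.castSucc) (hA : Acyc f) :
    (Gf f).IsAcyclic := by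
  intro v c hc
  -- pick a vertex of maximal rho on the cycle
  obtain ⟨u, huS, hmax⟩ : ∃ u ∈ c.support, ∀ w ∈ c.support, rho hA w ≤ rho hA u := by
    obtain ⟨u, hu, hmax⟩ := Finset.exists_max_image c.support.toFinset (rho hA)
      ⟨v, List.mem_toFinset.2 c.start_mem_support⟩
    exact ⟨u, List.mem_toFinset.1 hu, fun w hw => hmax w (List.mem_toFinset.2 hw)⟩
  set c' := c.rotate u huS with hc'def
  have hc' : c'.IsCycle := hc.rotate huS
  have hsup' : ∀ w ∈ c'.support, w ∈ c.support := by
    intro w hw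
    rw [c'.support_eq_cons] at hw
    rcases List.mem_cons.1 hw with h | h
    · exact h ▸ huS
    · have hperm := Walk.support_rotate c u huS
      have := hperm.mem_iff.1 h
      rw [c.support_eq_cons]
      exact List.mem_cons.2 (Or.inr this)
  obtain ⟨x, hadj, q, hq⟩ := Walk.not_nil_iff.1 hc'.not_nil
  rw [hq] at hc'
  rw [Walk.cons_isCycle_iff] at hc'
  obtain ⟨hqpath, hqe⟩ := hc'
  -- x = ext f u
  have hxsup : x ∈ c.support := by
    apply hsup'
    rw [hq]
    simp [Walk.support_cons, q.start_mem_support]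
  have hx : x = ext f u := adj_max hA hadj (hmax _ hxsup)
  -- last step of q enters u as well
  have hqnil : ¬ q.reverse.Nil := Walk.not_nil_of_ne hadj.ne'.symm
  obtain ⟨y, hadjy, r, hr⟩ := Walk.not_nil_iff.1 hqnil
  have hy_sup : y ∈ q.support := by
    have : y ∈ q.reverse.support := by
      rw [hr]
      simp [Walk.support_cons, r.start_mem_support]
    rwa [Walk.support_reverse, List.mem_reverse] at this
  have hy_c : y ∈ c.support := by
    apply hsup'
    rw [hq, Walk.support_cons]
    exact List.mem_cons.2 (Or.inr hy_sup)
  have hy : y = ext f u := adj_max hA hadjy (hmax _ hy_c)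
  have hedge : s(u, y) ∈ q.edges := by
    have : s(u, y) ∈ q.reverse.edges := by
      rw [hr]
      simp
    rwa [Walk.edges_reverse, List.mem_reverse] at this
  apply hqe
  rw [show s(u, x) = s(u, y) by rw [hx, hy]]
  exact hedge

lemma isTree_Gf {f : Fin n → Fin (n + 1)} (hf : ∀ p, f p ≠ p.castSucc) (hA : Acyc f) :
    (Gf f).IsTree :=
  (isTree_iff _).mpr ⟨connected_Gf hf hA, isAcyclic_Gf hf hA⟩

lemma edge_inj {f : Fin n → Fin (n + 1)} (hA : Acyc f) :
    Function.Injective (fun p : Fin n => s(p.castSucc, f p)) := by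
  intro p₁ p₂ h
  simp only [Sym2.eq_iff] at h
  rcases h with ⟨h1, -⟩ | ⟨h1, h2⟩
  · exact Fin.castSucc_injective n h1
  · exfalso
    have e1 : ext f p₁.castSucc = p₂.castSucc := by rw [ext_castSucc]; exact h2
    have e2 : ext f p₂.castSucc = p₁.castSucc := by rw [ext_castSucc]; exact h1.symm
    have l1 := rho_ext_lt hA (Fin.castSucc_lt_last p₁).ne
    have l2 := rho_ext_lt hA (Fin.castSucc_lt_last p₂).ne
    rw [e1] at l1
    rw [e2] at l2
    omega

lemma card_Ef {f : Fin n → Fin (n + 1)} (hA : Acyc f) : (Ef f).card = n := by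
  rw [Ef, Finset.card_image_of_injective _ (edge_inj hA), Finset.card_univ, Fintype.card_fin]

section parent

variable (G : SimpleGraph (Fin (n + 1)))

/-- the unique path to the root in a tree. -/
noncomputable def pathTo (hT : G.IsTree) (v : Fin (n + 1)) : G.Walk v (Fin.last n) :=
  (hT.existsUnique_path v (Fin.last n)).choose

lemma pathTo_isPath (hT : G.IsTree) (v) : (pathTo G hT v).IsPath :=
  (hT.existsUnique_path v (Fin.last n)).choose_spec.1

lemma pathTo_unique (hT : G.IsTree) {v} (q : G.Walk v (Fin.last n)) (hq : q.IsPath) :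
    q = pathTo G hT v :=
  (hT.existsUnique_path v (Fin.last n)).choose_spec.2 q hq

/-- the parent function of a tree, pointing towards the root `last`. -/
noncomputable def pf (hT : G.IsTree) : Fin n → Fin (n + 1) :=
  fun p => (pathTo G hT p.castSucc).getVert 1

lemma pathTo_not_nil (hT : G.IsTree) {v} (hv : v ≠ Fin.last n) : ¬ (pathTo G hT v).Nil :=
  Walk.not_nil_of_ne hv

lemma adj_pathTo (hT : G.IsTree) {v} (hv : v ≠ Fin.last n) :
    G.Adj v ((pathTo G hT v).getVert 1) :=
  Walk.adj_snd (pathTo_not_nil G hT hv)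

lemma pathTo_getVert1 (hT : G.IsTree) {v} (hv : v ≠ Fin.last n) :
    pathTo G hT ((pathTo G hT v).getVert 1) = (pathTo G hT v).tail := by
  exact ((pathTo_unique G hT _ ((pathTo_isPath G hT v).tail))).symm

lemma pathTo_length_lt (hT : G.IsTree) {v} (hv : v ≠ Fin.last n) :
    (pathTo G hT ((pathTo G hT v).getVert 1)).length < (pathTo G hT v).length := by
  rw [pathTo_getVert1 G hT hv]
  have := Walk.length_tail_add_one (pathTo_not_nil G hT hv)
  omega

lemma ext_pf (hT : G.IsTree) {v} (hv : v ≠ Fin.last n) :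
    ext (pf G hT) v = (pathTo G hT v).getVert 1 := by
  rw [ext]
  simp only [hv, dif_neg, not_false_iff]
  rw [pf, Fin.castSucc_castPred]

lemma acyc_pf (hT : G.IsTree) : Acyc (pf G hT) := by
  intro v
  have H : ∀ k : ℕ, ∀ v : Fin (n + 1), (pathTo G hT v).length = k →
      ∃ m, (ext (pf G hT))^[m] v = Fin.last n := by
    intro k
    induction k using Nat.strong_induction_on with
    | _ k ih =>
      intro v hk
      by_cases hv : v = Fin.last n
      · exact ⟨0, hv⟩
      · obtain ⟨m, hm⟩ := ih _ (hk ▸ pathTo_length_lt G hT hv) _ rfl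
        refine ⟨m + 1, ?_⟩
        rw [Function.iterate_succ_apply, ext_pf G hT hv, hm]
  exact H _ v rfl

lemma pf_ne (hT : G.IsTree) (p : Fin n) : pf G hT p ≠ p.castSucc := by
  rw [pf]
  exact (adj_pathTo G hT (Fin.castSucc_lt_last p).ne).ne'

end parent

/-- the walk from `v` to the root along `f`. -/
noncomputable def walkTo (f : Fin n → Fin (n + 1)) (hf : ∀ p, f p ≠ p.castSucc) (hA : Acyc f) :
    (v : Fin (n + 1)) → (Gf f).Walk v (Fin.last n) := fun v =>
  if h : v = Fin.last n then (SimpleGraph.Walk.nil.copy h.symm rfl)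
  else SimpleGraph.Walk.cons (adj_ext hf h) (walkTo f hf hA (ext f v))
  termination_by v => rho hA v
  decreasing_by exact rho_ext_lt hA h

lemma walkTo_support_rho {f : Fin n → Fin (n + 1)} (hf : ∀ p, f p ≠ p.castSucc) (hA : Acyc f) :
    ∀ v, ∀ w ∈ (walkTo f hf hA v).support, rho hA w ≤ rho hA v := by
  have H : ∀ k : ℕ, ∀ v, rho hA v = k → ∀ w ∈ (walkTo f hf hA v).support,
      rho hA w ≤ rho hA v := by
    intro k
    induction k using Nat.strong_induction_on with
    | _ k ih =>
      intro v hk w hw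
      rw [walkTo] at hw
      by_cases hv : v = Fin.last n
      · simp only [hv, dif_pos] at hw
        rw [Walk.support_copy, Walk.support_nil] at hw
        simp at hw
        subst hw
        subst hv
        exact le_refl _
      · simp only [hv, dif_neg, not_false_iff, Walk.support_cons] at hw
        rcases List.mem_cons.1 hw with h | h
        · exact h ▸ le_refl _
        · have hlt := rho_ext_lt hA hv
          have := ih _ (hk ▸ hlt) _ rfl w h
          omega
  exact fun v => H _ v rfl

lemma walkTo_isPath {f : Fin n → Fin (n + 1)} (hf : ∀ p, f p ≠ p.castSucc) (hA : Acyc f) :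
    ∀ v, (walkTo f hf hA v).IsPath := by
  have H : ∀ k : ℕ, ∀ v, rho hA v = k → (walkTo f hf hA v).IsPath := by
    intro k
    induction k using Nat.strong_induction_on with
    | _ k ih =>
      intro v hk
      rw [walkTo]
      by_cases hv : v = Fin.last n
      · simp only [hv, dif_pos]
        simp
      · simp only [hv, dif_neg, not_false_iff]
        rw [Walk.cons_isPath_iff]
        refine ⟨ih _ (hk ▸ rho_ext_lt hA hv) _ rfl, ?_⟩
        intro hmem
        have := walkTo_support_rho hf hA (ext f v) v hmem
        have := rho_ext_lt hA hv
        omega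
  exact fun v => H _ v rfl

lemma walkTo_getVert1 {f : Fin n → Fin (n + 1)} (hf : ∀ p, f p ≠ p.castSucc) (hA : Acyc f)
    {v} (hv : v ≠ Fin.last n) : (walkTo f hf hA v).getVert 1 = ext f v := by
  rw [walkTo]
  simp only [hv, dif_neg, not_false_iff]
  have h1 := Walk.getVert_cons_succ (n := 0) (walkTo f hf hA (ext f v)) (adj_ext hf hv)
  simpa using h1

lemma pf_Gf {f : Fin n → Fin (n + 1)} (hf : ∀ p, f p ≠ p.castSucc) (hA : Acyc f)
    (hT : (Gf f).IsTree) : pf (Gf f) hT = f := by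
  funext p
  rw [pf, ← pathTo_unique (Gf f) hT _ (walkTo_isPath hf hA p.castSucc),
    walkTo_getVert1 hf hA (Fin.castSucc_lt_last p).ne, ext_castSucc]

lemma Ef_pf (E : Finset (Sym2 (Fin (n + 1)))) (hD : ∀ e ∈ E, ¬ e.IsDiag)
    (hT : (SimpleGraph.fromEdgeSet (E : Set (Sym2 (Fin (n + 1))))).IsTree) :
    Ef (pf (SimpleGraph.fromEdgeSet (E : Set (Sym2 (Fin (n + 1))))) hT) = E := by
  set G := SimpleGraph.fromEdgeSet (E : Set (Sym2 (Fin (n + 1)))) with hG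
  set f := pf G hT with hfdef
  have hsub : Ef f ⊆ E := by
    intro e he
    rw [Ef, Finset.mem_image] at he
    obtain ⟨p, -, rfl⟩ := he
    have hadj : G.Adj p.castSucc (f p) := adj_pathTo G hT (Fin.castSucc_lt_last p).ne
    have hmem : s(p.castSucc, f p) ∈ G.edgeSet := hadj
    rw [hG, edgeSet_fromEdgeSet] at hmem
    exact_mod_cast hmem.1
  have hedgeFinset : G.edgeFinset = E := by
    ext e
    rw [mem_edgeFinset, hG, edgeSet_fromEdgeSet, Set.mem_diff]
    constructor
    · rintro ⟨h1, -⟩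
      exact_mod_cast h1
    · intro h
      exact ⟨by exact_mod_cast h, hD e h⟩
  have hEcard : E.card = n := by
    have h1 := hT.card_edgeFinset
    rw [hedgeFinset, Fintype.card_fin] at h1
    omega
  have hEfcard : (Ef f).card = n := card_Ef (acyc_pf G hT)
  exact Finset.eq_of_subset_of_card_le hsub (by omega)


end MTT

/-- **Weighted matrix-tree theorem (Kirchhoff) for the complete graph**: deleting the last
row and column of the weighted Laplacian of `K_{n+1}` yields a matrix `B` with
`det B = ∑_T ∏_{{i,j} ∈ E(T)} X_{ij}`, the sum over all spanning trees `T` of `K_{n+1}`,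
i.e. over all edge sets of non-loop edges whose associated graph is connected and acyclic. -/
theorem weighted_matrix_tree_theorem (n : ℕ) :
    Matrix.det (Matrix.of fun p q : Fin n =>
        weightedLaplacian n p.castSucc q.castSucc) =
      ∑ E ∈ Finset.univ.filter
          (fun E : Finset (Sym2 (Fin (n + 1))) =>
            (∀ e ∈ E, ¬ e.IsDiag) ∧
            (SimpleGraph.fromEdgeSet (E : Set (Sym2 (Fin (n + 1))))).IsTree),
        ∏ e ∈ E, X e := by
  classical
  rw [MTT.det_expand]
  rw [← Finset.sum_filter_of_ne (p := fun f => MTT.Acyc f)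
    (fun f _ hne => by
      by_contra hnA
      rw [MTT.det_Mz_of_not_acyc hnA] at hne
      simp at hne)]
  have hstep : ∀ f ∈ (Fintype.piFinset fun p : Fin n =>
      Finset.univ \ {p.castSucc}).filter (fun f => MTT.Acyc f),
      (∏ p, X s(p.castSucc, f p)) * (((MTT.Mz f).det : ℤ) : MTT.R n) =
      ∏ p, X s(p.castSucc, f p) := by
    intro f hf
    rw [Finset.mem_filter] at hf
    rw [MTT.det_Mz_of_acyc hf.2]
    simp
  rw [Finset.sum_congr rfl hstep]
  refine Finset.sum_bij' (i := fun f _ => MTT.Ef f)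
    (j := fun E hE => MTT.pf (SimpleGraph.fromEdgeSet (E : Set (Sym2 (Fin (n + 1)))))
      ((Finset.mem_filter.1 hE).2.2))
    ?_ ?_ ?_ ?_ ?_
  · intro f hf
    rw [Finset.mem_filter] at hf ⊢
    obtain ⟨hmem, hA⟩ := hf
    have hne : ∀ p, f p ≠ p.castSucc := by
      intro p
      have := (Fintype.mem_piFinset.1 hmem) p
      rw [Finset.mem_sdiff, Finset.mem_singleton] at this
      exact this.2
    refine ⟨Finset.mem_univ _, ?_, ?_⟩
    · intro e he
      simp only [MTT.Ef, Finset.mem_image] at he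
      obtain ⟨p, -, rfl⟩ := he
      rw [Sym2.mk_isDiag_iff]
      exact fun h => hne p h.symm
    · exact MTT.isTree_Gf hne hA
  · intro E hE
    rw [Finset.mem_filter] at hE ⊢
    obtain ⟨-, hD, hT⟩ := hE
    refine ⟨?_, MTT.acyc_pf _ hT⟩
    rw [Fintype.mem_piFinset]
    intro p
    rw [Finset.mem_sdiff, Finset.mem_singleton]
    exact ⟨Finset.mem_univ _, MTT.pf_ne _ hT p⟩
  · intro f hf
    rw [Finset.mem_filter] at hf
    obtain ⟨hmem, hA⟩ := hf
    have hne : ∀ p, f p ≠ p.castSucc := by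
      intro p
      have := (Fintype.mem_piFinset.1 hmem) p
      rw [Finset.mem_sdiff, Finset.mem_singleton] at this
      exact this.2
    exact MTT.pf_Gf hne hA _
  · intro E hE
    rw [Finset.mem_filter] at hE
    exact MTT.Ef_pf E hE.2.1 hE.2.2
  · intro f hf
    rw [Finset.mem_filter] at hf
    obtain ⟨hmem, hA⟩ := hf
    exact (Finset.prod_image (fun x _ y _ h => MTT.edge_inj hA h)).symm
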